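/- A sequence (\tau_i)_{i \ge 0} of nonnegative integers is the trail of some even binary partition if and only if every \tau_i is even, \tau_i \ge 2\tau_{i+1} for all i \ge 0, and \tau_i = 0 for all sufficiently large i; moreover when these conditions hold the even binary partition with that trail is unique, namely the one having exactly \tau_{i-1}/2 - \tau_i parts equal to 2^i for each i \ge 1. -/

import Mathlib

/-- An even binary partition: a multiset of parts, each a power of two that is at least 2. -/
def IsEvenBinaryPartition (P : Multiset ℕ) : Prop := ∀ p ∈ P, ∃ k : ℕ, 1 ≤ k ∧ p = 2 ^ k

/-- The trail of `P`: `τ i P = ∑_{p ∈ P, p ≥ 2^(i+1)} p / 2^i`. -/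
def trail (P : Multiset ℕ) (i : ℕ) : ℕ :=
  ((P.filter (fun p => 2 ^ (i + 1) ≤ p)).map (fun p => p / 2 ^ i)).sum

lemma trail_cons (a : ℕ) (P : Multiset ℕ) (i : ℕ) :
    trail (a ::ₘ P) i = (if 2 ^ (i + 1) ≤ a then a / 2 ^ i else 0) + trail P i := by
  unfold trail
  by_cases h : 2 ^ (i + 1) ≤ a
  · rw [Multiset.filter_cons_of_pos _ h, Multiset.map_cons, Multiset.sum_cons, if_pos h]
  · rw [Multiset.filter_cons_of_neg _ h, if_neg h, zero_add]

lemma trail_rec (P : Multiset ℕ) (hP : IsEvenBinaryPartition P) (i : ℕ) :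
    trail P i = 2 * (P.count (2 ^ (i + 1)) + trail P (i + 1)) := by
  induction P using Multiset.induction with
  | empty => simp [trail]
  | cons a s ih =>
    obtain ⟨k, hk1, rfl⟩ := hP a (Multiset.mem_cons_self a s)
    have hs : IsEvenBinaryPartition s := fun p hp => hP p (Multiset.mem_cons_of_mem hp)
    have ihs := ih hs
    have hple : ∀ m n : ℕ, ((2:ℕ) ^ m ≤ 2 ^ n) = (m ≤ n) := fun m n => by
      simp [Nat.pow_le_pow_iff_right (by norm_num : 1 < 2)]
    have hpinj : ∀ m n : ℕ, ((2:ℕ) ^ m = 2 ^ n) = (m = n) := fun m n => by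
      simp only [eq_iff_iff]
      exact ⟨fun h => Nat.pow_right_injective (le_refl 2) h, fun h => by rw [h]⟩
    rw [trail_cons, trail_cons, Multiset.count_cons]
    simp only [hple, hpinj]
    rcases lt_trichotomy k (i + 1) with h | h | h
    · split_ifs <;> omega
    · subst h
      have hd : (2:ℕ) ^ (i + 1) / 2 ^ i = 2 := by
        rw [pow_succ, Nat.mul_div_cancel_left _ (Nat.pos_of_ne_zero (by positivity))]
      split_ifs <;> omega
    · have h1 : (2:ℕ) ^ k / 2 ^ i = 2 ^ (k - i) := Nat.pow_div (by omega) (by norm_num)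
      have h2 : (2:ℕ) ^ k / 2 ^ (i + 1) = 2 ^ (k - (i + 1)) := Nat.pow_div (by omega) (by norm_num)
      have h3 : (2:ℕ) ^ (k - i) = 2 * 2 ^ (k - (i + 1)) := by
        rw [← pow_succ']
        congr 1
        omega
      split_ifs <;> omega

lemma trail_zero_of_large (P : Multiset ℕ) (i : ℕ) (h : ∀ p ∈ P, p < 2 ^ (i + 1)) :
    trail P i = 0 := by
  unfold trail
  rw [Multiset.filter_eq_nil.2 (fun p hp => by simpa using Nat.not_le.mpr (h p hp))]
  simp

lemma mem_lt_of_trail (P : Multiset ℕ) (i : ℕ) (h : P.sum ≤ i) : ∀ p ∈ P, p < 2 ^ (i + 1) := by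
  intro p hp
  have h1 : p ≤ P.sum := Multiset.single_le_sum (fun x _ => Nat.zero_le x) p hp
  calc p ≤ i := le_trans h1 h
    _ < 2 ^ i := Nat.lt_two_pow_self
    _ ≤ 2 ^ (i + 1) := Nat.pow_le_pow_right (by norm_num) (by omega)

lemma count_of_trail (P : Multiset ℕ) (hP : IsEvenBinaryPartition P) (i : ℕ) :
    P.count (2 ^ (i + 1)) = trail P i / 2 - trail P (i + 1) := by
  have := trail_rec P hP i
  omega

def buildP (τ : ℕ → ℕ) (N : ℕ) : Multiset ℕ :=
  (Finset.range N).sum fun j => Multiset.replicate (τ j / 2 - τ (j + 1)) (2 ^ (j + 1))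

lemma buildP_ebp (τ : ℕ → ℕ) (N : ℕ) : IsEvenBinaryPartition (buildP τ N) := by
  intro p hp
  rw [buildP, Multiset.mem_sum] at hp
  obtain ⟨j, _, hj⟩ := hp
  rw [Multiset.eq_of_mem_replicate hj]
  exact ⟨j + 1, by omega, rfl⟩

lemma buildP_count (τ : ℕ → ℕ) (N k : ℕ) :
    (buildP τ N).count (2 ^ (k + 1)) = if k < N then τ k / 2 - τ (k + 1) else 0 := by
  rw [buildP, Multiset.count_sum']
  have hpinj : ∀ j : ℕ, ((2:ℕ) ^ (j + 1) = 2 ^ (k + 1)) = (j = k) := fun j => by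
    simp only [eq_iff_iff]
    exact ⟨fun h => by have := Nat.pow_right_injective (le_refl 2) h; omega,
      fun h => by rw [h]⟩
  simp only [Multiset.count_replicate, hpinj]
  rw [Finset.sum_ite_eq']
  simp

lemma buildP_trail (τ : ℕ → ℕ) (N : ℕ) (hE : ∀ i, Even (τ i))
    (hM : ∀ i, 2 * τ (i + 1) ≤ τ i) (hN : ∀ i, N ≤ i → τ i = 0) :
    ∀ i, trail (buildP τ N) i = τ i := by
  have hzero : ∀ i, N ≤ i → trail (buildP τ N) i = 0 := by
    intro i hi
    apply trail_zero_of_large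
    intro p hp
    rw [buildP, Multiset.mem_sum] at hp
    obtain ⟨j, hjr, hj⟩ := hp
    rw [Multiset.eq_of_mem_replicate hj]
    have : j + 1 ≤ i := by simp [Finset.mem_range] at hjr; omega
    calc (2:ℕ) ^ (j + 1) ≤ 2 ^ i := Nat.pow_le_pow_right (by norm_num) this
      _ < 2 ^ (i + 1) := Nat.pow_lt_pow_right (by norm_num) (by omega)
  have key : ∀ d i, N ≤ i + d → trail (buildP τ N) i = τ i := by
    intro d
    induction d with
    | zero => intro i hi; rw [hzero i (by omega), hN i (by omega)]
    | succ d ih =>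
      intro i hi
      by_cases h : N ≤ i + d
      · exact ih i h
      · have hlt : i < N := by omega
        rw [trail_rec _ (buildP_ebp τ N), buildP_count, if_pos hlt, ih (i + 1) (by omega)]
        obtain ⟨r, hr⟩ := hE i
        have := hM i
        omega
  intro i
  exact key N i (by omega)

theorem trail_characterization (τ : ℕ → ℕ) :
    ((∃ P : Multiset ℕ, IsEvenBinaryPartition P ∧ ∀ i, trail P i = τ i) ↔
      ((∀ i, Even (τ i)) ∧ (∀ i, 2 * τ (i + 1) ≤ τ i) ∧ (∃ N, ∀ i, N ≤ i → τ i = 0))) ∧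
    (∀ P Q : Multiset ℕ, IsEvenBinaryPartition P → IsEvenBinaryPartition Q →
      (∀ i, trail P i = τ i) → (∀ i, trail Q i = τ i) → P = Q) ∧
    (∀ P : Multiset ℕ, IsEvenBinaryPartition P → (∀ i, trail P i = τ i) →
      ∀ i : ℕ, 1 ≤ i → P.count (2 ^ i) = τ (i - 1) / 2 - τ i) := by
  have hcount : ∀ P : Multiset ℕ, IsEvenBinaryPartition P → (∀ i, trail P i = τ i) →
      ∀ i : ℕ, 1 ≤ i → P.count (2 ^ i) = τ (i - 1) / 2 - τ i := by
    intro P hP hT i hi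
    obtain ⟨j, rfl⟩ : ∃ j, i = j + 1 := ⟨i - 1, by omega⟩
    rw [count_of_trail P hP j, hT, hT]
    simp
  refine ⟨⟨?_, ?_⟩, ?_, hcount⟩
  · rintro ⟨P, hP, hT⟩
    refine ⟨fun i => ?_, fun i => ?_, P.sum, fun i hi => ?_⟩
    · rw [← hT i, trail_rec P hP i]; exact even_two_mul _
    · have := trail_rec P hP i; rw [hT, hT] at this; omega
    · rw [← hT i]
      exact trail_zero_of_large P i (mem_lt_of_trail P i hi)
  · rintro ⟨hE, hM, N, hN⟩
    exact ⟨buildP τ N, buildP_ebp τ N, buildP_trail τ N hE hM hN⟩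
  · intro P Q hP hQ hTP hTQ
    ext a
    by_cases h : ∃ k : ℕ, 1 ≤ k ∧ a = 2 ^ k
    · obtain ⟨k, hk, rfl⟩ := h
      rw [hcount P hP hTP k hk, hcount Q hQ hTQ k hk]
    · rw [Multiset.count_eq_zero.2 (fun ha => h (hP a ha)),
        Multiset.count_eq_zero.2 (fun ha => h (hQ a ha))]
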